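/- arXiv:1803.05782 — 2 statements merged into one kernel-verified Lean document; each statement's English description precedes it below -/
import Mathlib

section
/- With the setup below, for every p ≥ 1: if g, h ∈ G₁ satisfy g⁻¹c^p g = h⁻¹c^p h, then gh⁻¹ ∈ E(c) and |gh⁻¹| ≤ 4K, so d(g⁻¹.o, h⁻¹.o) ≤ 4K. In particular, the map G₁ → G, g ↦ g⁻¹c^p g, has fibers of cardinality at most #{g ∈ G : |g| ≤ 4K}, which is finite by properness and independent of p. -/
open Metric Set Filter Pointwise

namespace ACcogrowth

variable {X : Type*} [MetricSpace X]

/-- A map `γ` is a geodesic when restricted to the interval `[a,b]`. -/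
def IsGeodesicOn (γ : ℝ → X) (a b : ℝ) : Prop :=
  ∀ s ∈ Set.Icc a b, ∀ t ∈ Set.Icc a b, dist (γ s) (γ t) = |s - t|

/-- `X` is a geodesic metric space: any two points are joined by a geodesic. -/
def GeodesicSpace (X : Type*) [MetricSpace X] : Prop :=
  ∀ x y : X, ∃ γ : ℝ → X, IsGeodesicOn γ 0 (dist x y) ∧ γ 0 = x ∧ γ (dist x y) = y

/-- The nearest-point projection of `x` to `Y`. -/
def proj (Y : Set X) (x : X) : Set X := {y ∈ Y | dist x y = Metric.infDist x Y}

/-- The projection of a set `Z` to `Y`. -/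
def projSet (Y Z : Set X) : Set X := ⋃ z ∈ Z, proj Y z

/-- The projection distance `d^π_Y(Z,Z')`. -/
noncomputable def dpi (Y Z Z' : Set X) : ℝ := Metric.diam (projSet Y Z ∪ projSet Y Z')

/-- `Y` is `C`-strongly contracting. -/
def StronglyContractingWith (C : ℝ) (Y : Set X) : Prop :=
  0 ≤ C ∧ ∀ x x' : X, dist x x' ≤ Metric.infDist x Y →
    Metric.diam (proj Y x ∪ proj Y x') ≤ C

/-- `Y` is strongly contracting. -/
def StronglyContracting (Y : Set X) : Prop := ∃ C, StronglyContractingWith C Y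

variable {G : Type*} [Group G] [MulAction G X]

/-- The action of `G` on `X` is (metrically) proper. -/
def ProperAction (G : Type*) [Group G] [MulAction G X] (o : X) : Prop :=
  ∀ (x : X) (r : ℝ), {g : G | dist x (g • o) ≤ r}.Finite

/-- The orbit of the basepoint under the cyclic group generated by `c`. -/
def cOrbit (c : G) (o : X) : Set X := Set.range fun i : ℤ => c ^ i • o

/-- `c` is a strongly contracting element for the action. -/
def IsStronglyContractingElement (c : G) (o : X) : Prop :=
  ¬ IsOfFinOrder c ∧ StronglyContracting (cOrbit c o)

/-- The elementary closure `E(c)`: elements moving `⟨c⟩.o` a finite Hausdorff distance. -/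
def Ec (c : G) (o : X) : Set G :=
  {g : G | EMetric.hausdorffEdist (g • cOrbit c o) (cOrbit c o) ≠ ⊤}

/-- The axis `𝓔 = E(c).o`. -/
def Esub (c : G) (o : X) : Set X := (· • o) '' Ec c o

/-- The family of distinct `G`-translates of `𝓔`. -/
def translates (c : G) (o : X) : Set (Set X) := Set.range fun g : G => g • Esub c o

/-- Axiom (P0) with constant `θ` for the family of translates. -/
def AxiomP0 (c : G) (o : X) (θ : ℝ) : Prop :=
  ∀ 𝓨 ∈ translates c o, ∀ 𝓧 ∈ translates c o, 𝓧 ≠ 𝓨 → dpi 𝓨 𝓧 𝓧 ≤ θ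

/-- Axiom (P1) with constant `θ` for the family of translates. -/
def AxiomP1 (c : G) (o : X) (θ : ℝ) : Prop :=
  ∀ 𝓧 ∈ translates c o, ∀ 𝓨 ∈ translates c o, ∀ 𝓩 ∈ translates c o,
    𝓧 ≠ 𝓨 → 𝓨 ≠ 𝓩 → 𝓧 ≠ 𝓩 → dpi 𝓨 𝓧 𝓩 > θ → dpi 𝓧 𝓨 𝓩 ≤ θ

/-- `C'` is a bounded-geodesic-image constant for all translates of `𝓔`. -/
def BGIconst (c : G) (o : X) (C' : ℝ) : Prop :=
  ∀ g : G, ∀ γ : ℝ → X, ∀ a b : ℝ, IsGeodesicOn γ a b →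
    (∀ t ∈ Set.Icc a b, C' ≤ Metric.infDist (γ t) (g • Esub c o)) →
    Metric.diam (projSet (g • Esub c o) (γ '' Set.Icc a b)) ≤ C'

/-- The set `G₁`. -/
def Gone (c : G) (o : X) (K : ℝ) : Set G :=
  {g : G | dpi (Esub c o) {o} {g • o} ≤ 2 * K ∧
    dpi (g • Esub c o) {o} {g • o} ≤ 2 * K ∧ g • Esub c o ≠ Esub c o}

/-- The set `G_{2,p}` of conjugates of `c^p` by elements of `G₁`. -/
def Gtwo (c : G) (o : X) (K : ℝ) (p : ℕ) : Set G :=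
  (fun g : G => g⁻¹ * c ^ p * g) '' Gone c o K

/-- A subset `S` of `G` is `s`-separated (with respect to the orbit pseudo-metric). -/
def SeparatedSet (o : X) (s : ℝ) (S : Set G) : Prop :=
  ∀ x ∈ S, ∀ y ∈ S, x ≠ y → s ≤ dist (x • o) (y • o)

/-- There is a geodesic from `x` to `y` passing within distance `D` of `z`. -/
def GeodesicPassesNear (x y z : X) (D : ℝ) : Prop :=
  ∃ γ : ℝ → X, IsGeodesicOn γ 0 (dist x y) ∧ γ 0 = x ∧ γ (dist x y) = y ∧
    ∃ t ∈ Set.Icc 0 (dist x y), dist (γ t) z ≤ D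

/-- The shadowed subset `G'_{4,p,D}` of a given set `G₃`. -/
def Gfour' (c : G) (o : X) (G₃ : Set G) (p : ℕ) (D : ℝ) : Set G :=
  {x ∈ G₃ | ∃ y ∈ G₃, y ≠ x ∧ GeodesicPassesNear o (x • o) ((y * c ^ (2 * p)) • o) D}

/-- The growth rate of a subset `H ⊆ G` with respect to the induced pseudo-metric. -/
noncomputable def growthRate (o : X) (H : Set G) : ℝ :=
  Filter.limsup
    (fun r : ℝ => Real.log (({h ∈ H | dist o (h • o) ≤ r}).ncard) / r) Filter.atTop

/-- The growth rate of a subset `B ⊆ X`. -/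
noncomputable def growthRateX (o : X) (B : Set X) : ℝ :=
  Filter.limsup
    (fun r : ℝ => Real.log (({b ∈ B | dist o b ≤ r}).ncard) / r) Filter.atTop

/-- `H` is divergent: its Poincaré series diverges at `s = δ_H`. -/
def Divergent (o : X) (H : Set G) : Prop :=
  ¬ Summable fun h : H => Real.exp (-(growthRate o H) * dist o ((h : G) • o))

/-- `G` has purely exponential growth with rate `δ`, shell width `Δ` and constant `A`. -/
def PurelyExponentialWith (G : Type*) [Group G] [MulAction G X] (o : X)
    (δ Δ A : ℝ) : Prop :=
  0 < δ ∧ 0 < Δ ∧ 1 ≤ A ∧ ∀ r : ℝ, 0 ≤ r →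
    Real.exp (δ * r) / A ≤
        (({g : G | r < dist o (g • o) ∧ dist o (g • o) ≤ r + Δ}).ncard : ℝ) ∧
    (({g : G | r < dist o (g • o) ∧ dist o (g • o) ≤ r + Δ}).ncard : ℝ) ≤
        A * Real.exp (δ * r)

/-- `G` has purely exponential growth. -/
def PurelyExponential (G : Type*) [Group G] [MulAction G X] (o : X) : Prop :=
  ∃ δ Δ A : ℝ, PurelyExponentialWith G o δ Δ A

/-- The tree's-worth map: `(g₁, …, g_k) ↦ (g₁ c g₂ c ⋯ g_k c).o`. -/
def treeMap (o : X) (c : G) (l : List G) : X := (l.map fun g => g * c).prod • o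


section AuxLemmas

variable {X : Type*} [MetricSpace X] {G : Type*} [Group G] [MulAction G X] [IsIsometricSMul G X]

lemma hEdist_smul (u : G) (s t : Set X) :
    EMetric.hausdorffEdist (u • s) (u • t) = EMetric.hausdorffEdist s t := by
  rw [← Set.image_smul, ← Set.image_smul]
  exact EMetric.hausdorffEdist_image (isometry_smul X u)

lemma one_mem_Ec (c : G) (o : X) : (1 : G) ∈ Ec c o := by
  simp [Ec, EMetric.hausdorffEdist, hausdorffEDist_self]

lemma mul_mem_Ec {c : G} {o : X} {a b : G} (ha : a ∈ Ec c o) (hb : b ∈ Ec c o) :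
    a * b ∈ Ec c o := by
  have htri := EMetric.hausdorffEdist_triangle (s := (a * b) • cOrbit c o)
    (t := a • cOrbit c o) (u := cOrbit c o)
  have h1 : EMetric.hausdorffEdist ((a * b) • cOrbit c o) (a • cOrbit c o)
      = EMetric.hausdorffEdist (b • cOrbit c o) (cOrbit c o) := by
    rw [mul_smul, ← hEdist_smul a (b • cOrbit c o) (cOrbit c o)]
  intro htop
  rw [EMetric.hausdorffEdist] at h1 htop
  rw [htop] at htri
  have := lt_of_le_of_lt htri (by
    rw [h1]
    exact ENNReal.add_lt_top.2 ⟨hb.lt_top, ha.lt_top⟩)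
  exact absurd this (by simp)

lemma inv_mem_Ec {c : G} {o : X} {a : G} (ha : a ∈ Ec c o) : a⁻¹ ∈ Ec c o := by
  have : EMetric.hausdorffEdist (a⁻¹ • cOrbit c o) (cOrbit c o)
      = EMetric.hausdorffEdist (a • cOrbit c o) (cOrbit c o) := by
    rw [← hEdist_smul a (a⁻¹ • cOrbit c o) (cOrbit c o), smul_inv_smul,
      EMetric.hausdorffEdist, hausdorffEDist_comm]
  rw [Ec, Set.mem_setOf_eq, this]
  exact ha

lemma o_mem_Esub (c : G) (o : X) : o ∈ Esub c o :=
  ⟨1, one_mem_Ec c o, one_smul G o⟩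

lemma smul_Esub {c : G} {o : X} {e : G} (he : e ∈ Ec c o) : e • Esub c o = Esub c o := by
  ext x
  constructor
  · rintro ⟨y, ⟨f, hf, rfl⟩, rfl⟩
    exact ⟨e * f, mul_mem_Ec he hf, by simp [mul_smul]⟩
  · rintro ⟨f, hf, rfl⟩
    refine ⟨(e⁻¹ * f) • o, ⟨e⁻¹ * f, mul_mem_Ec (inv_mem_Ec he) hf, rfl⟩, ?_⟩
    show e • (e⁻¹ * f) • o = f • o
    rw [← mul_smul, mul_inv_cancel_left]

lemma proj_self_of_mem {Y : Set X} {y : X} (hy : y ∈ Y) : proj Y y = {y} := by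
  have h0 : Metric.infDist y Y = 0 := Metric.infDist_zero_of_mem hy
  ext z
  simp only [proj, Set.mem_setOf_eq, h0, Set.mem_singleton_iff]
  constructor
  · rintro ⟨-, hz⟩
    exact (dist_eq_zero.1 hz).symm
  · rintro rfl
    exact ⟨hy, dist_self _⟩

lemma smul_mem_proj_smul {Y : Set X} {x y : X} (u : G) (hy : y ∈ proj Y x) :
    u • y ∈ proj (u • Y) (u • x) := by
  obtain ⟨hyY, hyd⟩ := hy
  refine ⟨Set.smul_mem_smul_set hyY, ?_⟩
  have : Metric.infDist (u • x) (u • Y) = Metric.infDist x Y := by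
    rw [← Set.image_smul]
    exact Metric.infDist_image (isometry_smul X u)
  rw [dist_smul u x y, this, hyd]

lemma proj_Esub_nonempty {o : X} (hproper : ProperAction G o) (c : G) (x : X) :
    (proj (Esub c o) x).Nonempty := by
  set Y := Esub c o with hY
  have hoY : o ∈ Y := o_mem_Esub c o
  set T : Set X := Y ∩ Metric.closedBall x (dist x o) with hT
  have hTfin : T.Finite := by
    refine Set.Finite.subset (Set.Finite.image (· • o) (hproper x (dist x o))) ?_
    rintro z ⟨⟨f, hf, rfl⟩, hz⟩
    exact ⟨f, by simpa [dist_comm] using hz, rfl⟩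
  have hTne : T.Nonempty := ⟨o, hoY, by simp [Metric.mem_closedBall, dist_comm]⟩
  obtain ⟨y, hyT, hymin⟩ := Set.exists_min_image T (fun z => dist x z) hTfin hTne
  refine ⟨y, hyT.1, ?_⟩
  have hle : Metric.infDist x Y ≤ dist x y := Metric.infDist_le_dist_of_mem hyT.1
  have hge : ∀ z ∈ Y, dist x y ≤ dist x z := by
    intro z hz
    by_cases hball : z ∈ Metric.closedBall x (dist x o)
    · exact hymin z ⟨hz, hball⟩
    · have h1 : dist x o < dist x z := by
        simp only [Metric.mem_closedBall, not_le] at hball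
        simpa [dist_comm] using hball
      have h2 : dist x y ≤ dist x o := by
        have := hyT.2
        simpa [Metric.mem_closedBall, dist_comm] using this
      linarith
  have : dist x y ≤ Metric.infDist x Y := by
    have hne : Nonempty Y := ⟨⟨o, hoY⟩⟩
    rw [Metric.infDist_eq_iInf]
    exact le_ciInf fun z => hge z z.2
  linarith

lemma projSet_singleton (Y : Set X) (z : X) : projSet Y {z} = proj Y z := by
  simp [projSet]

/-- If `dpi (Esub c o) {o} {z} ≤ B` then every projection of `z` to `𝓔` is within `B` of `o`. -/
lemma proj_close_of_dpi {c : G} {o : X} {z : X} {B : ℝ}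
    (hdpi : dpi (Esub c o) {o} {z} ≤ B) {y : X} (hy : y ∈ proj (Esub c o) z) :
    dist o y ≤ B := by
  set U := projSet (Esub c o) {o} ∪ projSet (Esub c o) {z} with hU
  have hUo : projSet (Esub c o) {o} = {o} := by
    rw [projSet_singleton, proj_self_of_mem (o_mem_Esub c o)]
  have hbdd : Bornology.IsBounded U := by
    rw [hU, hUo, projSet_singleton]
    refine (Bornology.isBounded_singleton).union ?_
    refine (Metric.isBounded_closedBall (x := z)
      (r := Metric.infDist z (Esub c o))).subset ?_
    rintro w ⟨-, hw⟩
    simpa [Metric.mem_closedBall, dist_comm] using le_of_eq hw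
  have ho : o ∈ U := by rw [hU, hUo]; exact Or.inl rfl
  have hyU : y ∈ U := by rw [hU]; exact Or.inr (by rw [projSet_singleton]; exact hy)
  exact le_trans (Metric.dist_le_diam_of_mem hbdd ho hyU) hdpi

/-- An element commuting with a positive power of `c` lies in `E(c)`. -/
lemma mem_Ec_of_commute {c e : G} (o : X) {p : ℕ} (hp : 1 ≤ p)
    (hcomm : c ^ p * e = e * c ^ p) : e ∈ Ec c o := by
  have hpz : (0 : ℤ) < (p : ℤ) := by exact_mod_cast hp
  set M : ENNReal := Finset.sup (Finset.range p)
    (fun n => edist ((e * c ^ n) • o) ((c ^ n : G) • o)) with hM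
  have key : ∀ i : ℤ, edist (e • ((c ^ i) • o)) ((c ^ i) • o) ≤ M := by
    intro i
    set q : ℤ := i / (p : ℤ)
    set r : ℤ := i % (p : ℤ)
    have hr0 : 0 ≤ r := Int.emod_nonneg i (by positivity)
    have hrp : r < (p : ℤ) := Int.emod_lt_of_pos i hpz
    set n : ℕ := r.toNat with hn
    have hrn : (n : ℤ) = r := Int.toNat_of_nonneg hr0
    have hnp : n ∈ Finset.range p := by
      refine Finset.mem_range.2 ?_
      omega
    have hi : i = (p : ℤ) * q + r := (Int.mul_ediv_add_emod i (p : ℤ)).symm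
    have hzpow : c ^ i = (c ^ p) ^ q * c ^ n := by
      rw [hi, zpow_add, zpow_mul, zpow_natCast, ← hrn, zpow_natCast]
    have hc0 : Commute (c ^ p) e := hcomm
    have hcq : Commute ((c ^ p) ^ q) e := hc0.zpow_left q
    have h1 : e • ((c ^ i) • o) = ((c ^ p) ^ q) • ((e * c ^ n) • o) := by
      rw [hzpow, ← mul_smul, ← mul_smul, ← mul_assoc, ← hcq.eq, mul_assoc]
    have h2 : (c ^ i) • o = ((c ^ p) ^ q) • ((c ^ n : G) • o) := by
      rw [hzpow, mul_smul]
    rw [h1, h2, edist_smul_left, hM]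
    exact Finset.le_sup (f := fun n => edist ((e * c ^ n) • o) ((c ^ n : G) • o)) hnp
  have hMtop : M ≠ ⊤ := by
    rw [hM, ← lt_top_iff_ne_top]
    exact (Finset.sup_lt_iff (show (⊥ : ENNReal) < ⊤ by simp)).2 fun n _ => edist_lt_top _ _
  intro htop
  apply hMtop
  refine top_le_iff.1 ?_
  rw [← htop]
  refine EMetric.hausdorffEdist_le_of_mem_edist ?_ ?_
  · rintro x ⟨w, ⟨i, rfl⟩, rfl⟩
    exact ⟨(c ^ i) • o, ⟨i, rfl⟩, key i⟩
  · rintro x ⟨i, rfl⟩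
    exact ⟨e • ((c ^ i) • o), Set.smul_mem_smul_set ⟨i, rfl⟩, by rw [edist_comm]; exact key i⟩

end AuxLemmas

/-- **Lemma.** For every `p ≥ 1`, if `g, h ∈ G₁` satisfy `g⁻¹c^p g = h⁻¹c^p h`, then
`gh⁻¹ ∈ E(c)` and `|gh⁻¹| ≤ 4K`, so `d(g⁻¹.o, h⁻¹.o) ≤ 4K`; in particular the map
`g ↦ g⁻¹c^p g` on `G₁` has fibers of cardinality at most `#{g : |g| ≤ 4K}`, which is finite
by properness and independent of `p`. -/
theorem conjugation_map_bounded_to_one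
    {G : Type*} [Group G] {X : Type*} [MetricSpace X]
    [MulAction G X] [IsIsometricSMul G X] (o : X)
    (hgeo : GeodesicSpace X)
    (hproper : ProperAction G o)
    (c : G) (hc : IsStronglyContractingElement c o)
    (K : ℝ) (hK : 0 ≤ K) :
    (∀ p : ℕ, 1 ≤ p → ∀ g ∈ Gone c o K, ∀ h ∈ Gone c o K,
      g⁻¹ * c ^ p * g = h⁻¹ * c ^ p * h →
        g * h⁻¹ ∈ Ec c o ∧ dist o ((g * h⁻¹) • o) ≤ 4 * K ∧
        dist (g⁻¹ • o) (h⁻¹ • o) ≤ 4 * K) ∧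
    ({g : G | dist o (g • o) ≤ 4 * K}).Finite ∧
    (∀ p : ℕ, 1 ≤ p → ∀ x : G,
      ({g ∈ Gone c o K | g⁻¹ * c ^ p * g = x}).ncard ≤
        ({g : G | dist o (g • o) ≤ 4 * K}).ncard) := by
  have hfin : ({g : G | dist o (g • o) ≤ 4 * K}).Finite := hproper o (4 * K)
  have main : ∀ p : ℕ, 1 ≤ p → ∀ g ∈ Gone c o K, ∀ h ∈ Gone c o K,
      g⁻¹ * c ^ p * g = h⁻¹ * c ^ p * h →
        g * h⁻¹ ∈ Ec c o ∧ dist o ((g * h⁻¹) • o) ≤ 4 * K ∧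
        dist (g⁻¹ • o) (h⁻¹ • o) ≤ 4 * K := by
    intro p hp g hg h hh heq
    have hcomm : c ^ p * (g * h⁻¹) = (g * h⁻¹) * c ^ p := by
      have h1 : c ^ p * (g * h⁻¹) = g * (g⁻¹ * c ^ p * g) * h⁻¹ := by group
      rw [h1, heq]
      group
    have heEc : g * h⁻¹ ∈ Ec c o := mem_Ec_of_commute o hp hcomm
    -- projection of h•o to 𝓔
    obtain ⟨y, hy⟩ := proj_Esub_nonempty hproper c (h • o)
    have hy2K : dist o y ≤ 2 * K := proj_close_of_dpi hh.1 hy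
    -- (g*h⁻¹) • y is a projection of g•o to 𝓔
    have hgy : (g * h⁻¹) • y ∈ proj (Esub c o) (g • o) := by
      have := smul_mem_proj_smul (g * h⁻¹) hy
      rwa [smul_Esub heEc, ← mul_smul, inv_mul_cancel_right] at this
    have hgy2K : dist o ((g * h⁻¹) • y) ≤ 2 * K := proj_close_of_dpi hg.1 hgy
    have hdist : dist o ((g * h⁻¹) • o) ≤ 4 * K := by
      have htri := dist_triangle o ((g * h⁻¹) • y) ((g * h⁻¹) • o)
      have h2 : dist ((g * h⁻¹) • y) ((g * h⁻¹) • o) = dist o y := by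
        rw [dist_smul, dist_comm]
      linarith
    refine ⟨heEc, hdist, ?_⟩
    have : dist (g⁻¹ • o) (h⁻¹ • o) = dist o ((g * h⁻¹) • o) := by
      rw [← dist_smul g (g⁻¹ • o) (h⁻¹ • o), smul_inv_smul, ← mul_smul]
    rw [this]
    exact hdist
  refine ⟨main, hfin, ?_⟩
  intro p hp x
  set F : Set G := {g ∈ Gone c o K | g⁻¹ * c ^ p * g = x} with hF
  rcases F.eq_empty_or_nonempty with hFe | ⟨h0, hh0⟩
  · simp [hFe]
  · have hsub : (fun g => g * h0⁻¹) '' F ⊆ {g : G | dist o (g • o) ≤ 4 * K} := by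
      rintro - ⟨g, hgF, rfl⟩
      exact (main p hp g hgF.1 h0 hh0.1 (hgF.2.trans hh0.2.symm)).2.1
    have hinj : Set.InjOn (fun g => g * h0⁻¹) F := fun a _ b _ hab => by
      simpa using hab
    calc F.ncard = ((fun g => g * h0⁻¹) '' F).ncard := (Set.ncard_image_of_injOn hinj).symm
      _ ≤ ({g : G | dist o (g • o) ≤ 4 * K}).ncard := Set.ncard_le_ncard hsub hfin

end ACcogrowth
end

section
/- Let G act properly by isometries on a geodesic metric space X with basepoint o and with a strongly contracting element c', and suppose G has purely exponential growth (in particular δ_G > 0). Then every infinite normal subgroup N of G contains an element that does not lie in E(c'); equivalently, if an infinite normal subgroup N of G satisfies N ⊆ E(c'), then G = E(c') is virtually cyclic and G does not have purely exponential growth. -/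
open Metric Set Filter Pointwise

namespace ACcogrowth

variable {X : Type*} [MetricSpace X]

variable {G : Type*} [Group G] [MulAction G X]

set_option linter.unusedSectionVars false
section AuxACC

variable {G : Type*} [Group G] {X : Type*} [MetricSpace X]
  [MulAction G X] [IsIsometricSMul G X]

lemma AC_smul_orbit_sub (g c : G) (o : X) :
    g • cOrbit c o ⊆ Set.range (fun h : G => h • o) := by
  rintro x hx
  rcases hx with ⟨y, ⟨i, rfl⟩, rfl⟩
  exact ⟨g * c ^ i, by simp [mul_smul]⟩

lemma AC_cOrbit_nonempty (c : G) (o : X) : (cOrbit c o).Nonempty :=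
  ⟨o, ⟨0, by simp⟩⟩

lemma AC_smul_nonempty (g : G) {Y : Set X} (h : Y.Nonempty) : (g • Y).Nonempty := by
  rcases h with ⟨y, hy⟩; exact ⟨g • y, Set.smul_mem_smul_set hy⟩

/-- Attainment of nearest points on orbit-like sets, under a proper action. -/
lemma AC_exists_proj {o : X} (hproper : ProperAction G o) {Y : Set X}
    (hYo : Y ⊆ Set.range (fun h : G => h • o)) (hY : Y.Nonempty) (x : X) :
    ∃ y, y ∈ proj Y x := by
  set r : ℝ := Metric.infDist x Y + 1 with hr
  obtain ⟨y₀, hy₀Y, hy₀⟩ := (Metric.infDist_lt_iff hY).1 (show Metric.infDist x Y < r by rw [hr]; exact lt_add_one _)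
  have hTfin : {h : G | dist x (h • o) ≤ r}.Finite := hproper x r
  have hCand : (Y ∩ Metric.closedBall x r).Finite := by
    apply (hTfin.image (fun h => h • o)).subset
    rintro y ⟨hyY, hyB⟩
    rcases hYo hyY with ⟨h, rfl⟩
    exact Set.mem_image_of_mem _ (by simpa [dist_comm] using hyB)
  have hCandne : (Y ∩ Metric.closedBall x r).Nonempty :=
    ⟨y₀, hy₀Y, Metric.mem_closedBall.2 (by rw [dist_comm]; exact hy₀.le)⟩
  obtain ⟨y, hy, hmin⟩ := Set.exists_min_image _ (fun y => dist x y) hCand hCandne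
  refine ⟨y, hy.1, le_antisymm ?_ (Metric.infDist_le_dist_of_mem hy.1)⟩
  by_contra hlt
  push_neg at hlt
  obtain ⟨z, hzY, hz⟩ := (Metric.infDist_lt_iff hY).1 hlt
  have hyr : dist x y ≤ r := by
    have := hy.2; rw [Metric.mem_closedBall, dist_comm] at this; exact this
  have hzB : z ∈ Y ∩ Metric.closedBall x r :=
    ⟨hzY, Metric.mem_closedBall.2 (by rw [dist_comm]; linarith)⟩
  linarith [hmin z hzB]

lemma AC_proj_bounded (Y : Set X) (x : X) :
    Bornology.IsBounded (proj Y x) := by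
  apply (Metric.isBounded_closedBall (x := x) (r := Metric.infDist x Y)).subset
  rintro y ⟨hyY, hyd⟩
  simpa [Metric.mem_closedBall, dist_comm] using hyd.le

/-- Contraction applied to a pair of nearest-point projections. -/
lemma AC_pair {C : ℝ} {Y : Set X} (hC : StronglyContractingWith C Y)
    {x x' : X} (h : dist x x' ≤ Metric.infDist x Y)
    {p q : X} (hp : p ∈ proj Y x) (hq : q ∈ proj Y x') : dist p q ≤ C := by
  have hb : Bornology.IsBounded (proj Y x ∪ proj Y x') :=
    (AC_proj_bounded Y x).union (AC_proj_bounded Y x')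
  exact le_trans (Metric.dist_le_diam_of_mem hb (Set.mem_union_left _ hp)
    (Set.mem_union_right _ hq)) (hC.2 x x' h)

lemma AC_infDist_smul (g : G) (x : X) (Y : Set X) :
    Metric.infDist (g • x) (g • Y) = Metric.infDist x Y := by
  simp [Metric.infDist]

lemma AC_proj_smul (g : G) (Y : Set X) (x : X) :
    proj (g • Y) (g • x) = g • proj Y x := by
  ext y
  constructor
  · rintro ⟨hyY, hyd⟩
    rcases hyY with ⟨z, hzY, rfl⟩
    refine Set.smul_mem_smul_set ⟨hzY, ?_⟩
    rw [dist_smul, AC_infDist_smul] at hyd; exact hyd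
  · rintro ⟨z, ⟨hzY, hzd⟩, rfl⟩
    refine ⟨Set.smul_mem_smul_set hzY, ?_⟩
    rw [dist_smul, AC_infDist_smul]; exact hzd

lemma AC_contr_smul {C : ℝ} {Y : Set X} (hC : StronglyContractingWith C Y) (g : G) :
    StronglyContractingWith C (g • Y) := by
  refine ⟨hC.1, fun x x' h => ?_⟩
  have hx : x = g • (g⁻¹ • x) := by simp
  have hx' : x' = g • (g⁻¹ • x') := by simp
  rw [hx, hx', AC_proj_smul, AC_proj_smul, ← Set.smul_set_union, diam_smul]
  apply hC.2
  rw [hx, hx'] at h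
  rw [dist_smul, AC_infDist_smul] at h
  exact h

end AuxACC
section AuxACC2

variable {X : Type*} [MetricSpace X]

lemma AC_geo_shift {γ : ℝ → X} {T a : ℝ} (hγ : IsGeodesicOn γ 0 T)
    (ha : 0 ≤ a) (haT : a ≤ T) : IsGeodesicOn (fun s => γ (s + a)) 0 (T - a) := by
  intro s hs t ht
  have h1 : s + a ∈ Set.Icc 0 T := ⟨by linarith [hs.1], by linarith [hs.2]⟩
  have h2 : t + a ∈ Set.Icc 0 T := ⟨by linarith [ht.1], by linarith [ht.2]⟩
  have := hγ (s + a) h1 (t + a) h2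
  simpa using this

lemma AC_geo_dist {γ : ℝ → X} {T : ℝ} (hγ : IsGeodesicOn γ 0 T)
    {s t : ℝ} (hs : s ∈ Set.Icc 0 T) (ht : t ∈ Set.Icc 0 T) (hst : s ≤ t) :
    dist (γ s) (γ t) = t - s := by
  rw [hγ s hs t ht, abs_sub_comm, abs_of_nonneg (by linarith)]

lemma AC_chain {C : ℝ} {Y : Set X} (hC : StronglyContractingWith C Y)
    (hatt : ∀ x : X, ∃ y, y ∈ proj Y x) {R : ℝ} (hR : 0 < R) :
    ∀ n : ℕ, ∀ T : ℝ, ∀ γ : ℝ → X, IsGeodesicOn γ 0 T → 0 ≤ T → T ≤ n * R →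
    (∀ t ∈ Set.Icc (0:ℝ) T, R ≤ Metric.infDist (γ t) Y) →
    ∀ p ∈ proj Y (γ 0), ∀ q ∈ proj Y (γ T), dist p q ≤ (n + 1) * C := by
  intro n
  induction n with
  | zero =>
    intro T γ hγ hT0 hTn hfar p hp q hq
    have hT : T = 0 := le_antisymm (by simpa using hTn) hT0
    subst hT
    have := AC_pair hC (by simp [Metric.infDist_nonneg] : dist (γ 0) (γ 0) ≤ Metric.infDist (γ 0) Y) hp hq
    push_cast
    linarith [hC.1]
  | succ n ih =>
    intro T γ hγ hT0 hTn hfar p hp q hq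
    set r₀ : ℝ := Metric.infDist (γ 0) Y with hr₀
    have hRr₀ : R ≤ r₀ := hfar 0 ⟨le_refl _, hT0⟩
    have hr₀0 : 0 ≤ r₀ := le_trans hR.le hRr₀
    by_cases hTr : T ≤ r₀
    · have hd : dist (γ 0) (γ T) = T := by
        have := AC_geo_dist hγ ⟨le_refl _, hT0⟩ ⟨hT0, le_refl _⟩ hT0
        simpa using this
      have := AC_pair hC (by rw [hd]; exact hTr) hp hq
      have hn : (0:ℝ) ≤ (n : ℝ) := Nat.cast_nonneg n
      nlinarith [hC.1]
    · push_neg at hTr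
      have hr₀T : r₀ ∈ Set.Icc (0:ℝ) T := ⟨hr₀0, hTr.le⟩
      obtain ⟨w, hw⟩ := hatt (γ r₀)
      have hpw : dist p w ≤ C := by
        refine AC_pair hC ?_ hp hw
        rw [AC_geo_dist hγ ⟨le_refl _, hT0⟩ hr₀T hr₀0, ← hr₀]
        linarith
      have hwq : dist w q ≤ (n + 1) * C := by
        have hγ' : IsGeodesicOn (fun s => γ (s + r₀)) 0 (T - r₀) :=
          AC_geo_shift hγ hr₀0 hTr.le
        have h1 : (fun s => γ (s + r₀)) 0 = γ r₀ := by simp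
        have h2 : (fun s => γ (s + r₀)) (T - r₀) = γ T := by simp
        refine ih (T - r₀) (fun s => γ (s + r₀)) hγ' (by linarith) ?_ ?_ w ?_ q ?_
        · push_cast at hTn ⊢; linarith
        · intro t ht
          exact hfar (t + r₀) ⟨by linarith [ht.1], by linarith [ht.2]⟩
        · rw [zero_add]; exact hw
        · rw [sub_add_cancel]; exact hq
      calc dist p q ≤ dist p w + dist w q := dist_triangle _ _ _
        _ ≤ C + (n + 1) * C := add_le_add hpw hwq
        _ = (↑(n + 1) + 1) * C := by push_cast; ring

lemma AC_far_proj {C : ℝ} {Y : Set X} (hC : StronglyContractingWith C Y)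
    (hatt : ∀ x : X, ∃ y, y ∈ proj Y x) {R : ℝ} (hR : 0 < R)
    {T : ℝ} {γ : ℝ → X} (hγ : IsGeodesicOn γ 0 T) (hT0 : 0 ≤ T)
    (hfar : ∀ t ∈ Set.Icc (0:ℝ) T, R ≤ Metric.infDist (γ t) Y)
    {p q : X} (hp : p ∈ proj Y (γ 0)) (hq : q ∈ proj Y (γ T)) :
    dist p q ≤ C * (T / R + 2) := by
  set n : ℕ := ⌈T / R⌉₊ with hn
  have hTn : T ≤ n * R := by
    rw [← div_le_iff₀ hR]
    exact Nat.le_ceil _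
  have h1 := AC_chain hC hatt hR n T γ hγ hT0 hTn hfar p hp q hq
  have h2 : (n : ℝ) < T / R + 1 :=
    Nat.ceil_lt_add_one (div_nonneg hT0 hR.le)
  nlinarith [hC.1]

lemma AC_qc {C : ℝ} {Y : Set X} (hC1 : 1 ≤ C) (hC : StronglyContractingWith C Y)
    (hatt : ∀ x : X, ∃ y, y ∈ proj Y x) {T : ℝ} {γ : ℝ → X}
    (hγ : IsGeodesicOn γ 0 T) (hT0 : 0 ≤ T)
    (h0 : γ 0 ∈ Y) (hTY : γ T ∈ Y) :
    ∀ t ∈ Set.Icc (0:ℝ) T, Metric.infDist (γ t) Y ≤ 20 * C := by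
  intro th hth
  by_contra h20
  push_neg at h20
  set A : Set ℝ := {s ∈ Set.Icc (0:ℝ) th | Metric.infDist (γ s) Y ≤ 5 * C} with hA
  have hA0 : (0:ℝ) ∈ A := by
    refine ⟨⟨le_refl _, hth.1⟩, ?_⟩
    rw [Metric.infDist_zero_of_mem h0]; linarith
  have hAbdd : BddAbove A := ⟨th, fun s hs => hs.1.2⟩
  set s₁ : ℝ := sSup A with hs₁
  have hs₁0 : 0 ≤ s₁ := le_csSup hAbdd hA0
  have hs₁th : s₁ ≤ th := csSup_le ⟨0, hA0⟩ fun s hs => hs.1.2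
  have hs₁T : s₁ ∈ Set.Icc (0:ℝ) T := ⟨hs₁0, le_trans hs₁th hth.2⟩
  have hs₁d : Metric.infDist (γ s₁) Y ≤ 5 * C := by
    refine le_of_forall_pos_le_add fun ε hε => ?_
    obtain ⟨s, hsA, hss⟩ := exists_lt_of_lt_csSup ⟨0, hA0⟩ (show s₁ - ε < s₁ by linarith)
    have hss₁ : s ≤ s₁ := le_csSup hAbdd hsA
    have hd : dist (γ s₁) (γ s) = s₁ - s := by
      rw [dist_comm]
      exact AC_geo_dist hγ ⟨hsA.1.1, le_trans hsA.1.2 hth.2⟩ hs₁T hss₁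
    calc Metric.infDist (γ s₁) Y ≤ Metric.infDist (γ s) Y + dist (γ s₁) (γ s) :=
          Metric.infDist_le_infDist_add_dist
      _ ≤ 5 * C + ε := by rw [hd]; have := hsA.2; linarith
  set B : Set ℝ := {s ∈ Set.Icc th T | Metric.infDist (γ s) Y ≤ 5 * C} with hB
  have hBT : T ∈ B := by
    refine ⟨⟨hth.2, le_refl _⟩, ?_⟩
    rw [Metric.infDist_zero_of_mem hTY]; linarith
  have hBbdd : BddBelow B := ⟨th, fun s hs => hs.1.1⟩
  set s₂ : ℝ := sInf B with hs₂
  have hs₂th : th ≤ s₂ := le_csInf ⟨T, hBT⟩ fun s hs => hs.1.1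
  have hs₂T : s₂ ≤ T := csInf_le hBbdd hBT
  have hs₂I : s₂ ∈ Set.Icc (0:ℝ) T := ⟨le_trans hth.1 hs₂th, hs₂T⟩
  have hs₂d : Metric.infDist (γ s₂) Y ≤ 5 * C := by
    refine le_of_forall_pos_le_add fun ε hε => ?_
    obtain ⟨s, hsB, hss⟩ := exists_lt_of_csInf_lt ⟨T, hBT⟩ (show s₂ < s₂ + ε by linarith)
    have hss₂ : s₂ ≤ s := csInf_le hBbdd hsB
    have hd : dist (γ s₂) (γ s) = s - s₂ :=
      AC_geo_dist hγ hs₂I ⟨le_trans hth.1 hsB.1.1, hsB.1.2⟩ hss₂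
    calc Metric.infDist (γ s₂) Y ≤ Metric.infDist (γ s) Y + dist (γ s₂) (γ s) :=
          Metric.infDist_le_infDist_add_dist
      _ ≤ 5 * C + ε := by rw [hd]; have := hsB.2; linarith
  have hs₁lt : s₁ < th := by
    rcases lt_or_eq_of_le hs₁th with h | h
    · exact h
    · exfalso; rw [h] at hs₁d; linarith
  have hs₂gt : th < s₂ := by
    rcases lt_or_eq_of_le hs₂th with h | h
    · exact h
    · exfalso; rw [← h] at hs₂d; linarith
  set η : ℝ := Metric.infDist (γ th) Y - 20 * C with hη
  have hηpos : 0 < η := by simp [hη]; linarith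
  set ε : ℝ := min (η / 5) (min ((th - s₁) / 2) ((s₂ - th) / 2)) with hε
  have hεpos : 0 < ε := by
    apply lt_min (by linarith)
    exact lt_min (by linarith) (by linarith)
  have hεη : ε ≤ η / 5 := min_le_left _ _
  have hε1 : ε ≤ (th - s₁) / 2 := le_trans (min_le_right _ _) (min_le_left _ _)
  have hε2 : ε ≤ (s₂ - th) / 2 := le_trans (min_le_right _ _) (min_le_right _ _)
  set a : ℝ := s₁ + ε with ha
  set b : ℝ := s₂ - ε with hb
  have hath : a ≤ th := by simp [ha]; linarith
  have hbth : th ≤ b := by simp [hb]; linarith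
  have haI : a ∈ Set.Icc (0:ℝ) T := ⟨by linarith, le_trans hath hth.2⟩
  have hbI : b ∈ Set.Icc (0:ℝ) T := ⟨le_trans hth.1 hbth, by simp [hb]; linarith⟩
  have hmiddle : ∀ s, a ≤ s → s ≤ b → 5 * C ≤ Metric.infDist (γ s) Y := by
    intro s has hsb
    by_contra hcon
    push_neg at hcon
    rcases le_or_gt s th with h | h
    · have hsA : s ∈ A := ⟨⟨by linarith, h⟩, hcon.le⟩
      have := le_csSup hAbdd hsA
      linarith
    · have hsB : s ∈ B := ⟨⟨h.le, by
        have : b ≤ T := hbI.2; linarith⟩, hcon.le⟩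
      have := csInf_le hBbdd hsB
      linarith
  -- apply far_proj on [a,b]
  have hab : 0 ≤ b - a := by linarith
  have hγ'' : IsGeodesicOn (fun s => γ (s + a)) 0 (b - a) := by
    have := AC_geo_shift hγ haI.1 (le_trans (le_trans hath hbth) hbI.2)
    intro s hs t ht
    exact this s ⟨hs.1, by linarith [hs.2]⟩ t ⟨ht.1, by linarith [ht.2]⟩
  obtain ⟨p, hp⟩ := hatt ((fun s => γ (s + a)) 0)
  obtain ⟨q, hq⟩ := hatt ((fun s => γ (s + a)) (b - a))
  have hfar' : ∀ t ∈ Set.Icc (0:ℝ) (b - a), 5 * C ≤ Metric.infDist ((fun s => γ (s + a)) t) Y := by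
    intro t ht
    exact hmiddle (t + a) (by linarith [ht.1]) (by linarith [ht.2])
  have hfp := AC_far_proj hC hatt (show (0:ℝ) < 5 * C by linarith) hγ'' hab hfar' hp hq
  have hCne : C ≠ 0 := by linarith
  have h5 : C * ((b - a) / (5 * C) + 2) = (b - a) / 5 + 2 * C := by
    field_simp
  rw [h5] at hfp
  -- endpoint distances
  have hp0 : (fun s => γ (s + a)) 0 = γ a := by simp
  have hqb : (fun s => γ (s + a)) (b - a) = γ b := by simp
  rw [hp0] at hp
  rw [hqb] at hq
  have hpa : dist (γ a) p = Metric.infDist (γ a) Y := hp.2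
  have hqb' : dist (γ b) q = Metric.infDist (γ b) Y := hq.2
  have hia : Metric.infDist (γ a) Y ≤ 5 * C + ε := by
    calc Metric.infDist (γ a) Y ≤ Metric.infDist (γ s₁) Y + dist (γ a) (γ s₁) :=
          Metric.infDist_le_infDist_add_dist
      _ ≤ 5 * C + ε := by
          rw [dist_comm, AC_geo_dist hγ hs₁T haI (by simp [ha]; linarith)]
          simp [ha]; linarith
  have hib : Metric.infDist (γ b) Y ≤ 5 * C + ε := by
    calc Metric.infDist (γ b) Y ≤ Metric.infDist (γ s₂) Y + dist (γ b) (γ s₂) :=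
          Metric.infDist_le_infDist_add_dist
      _ ≤ 5 * C + ε := by
          rw [AC_geo_dist hγ hbI hs₂I (by simp [hb]; linarith)]
          simp [hb]; linarith
  have hdab : dist (γ a) (γ b) = b - a := AC_geo_dist hγ haI hbI (by linarith)
  have htri : b - a ≤ (5 * C + ε) + ((b - a) / 5 + 2 * C) + (5 * C + ε) := by
    calc b - a = dist (γ a) (γ b) := hdab.symm
      _ ≤ dist (γ a) p + dist p q + dist q (γ b) := dist_triangle4 _ _ _ _
      _ ≤ (5 * C + ε) + ((b - a) / 5 + 2 * C) + (5 * C + ε) := by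
          rw [dist_comm q (γ b)]
          refine add_le_add (add_le_add ?_ hfp) ?_
          · rw [hpa]; exact hia
          · rw [hqb']; exact hib
  have hba : b - a ≤ 15 * C + (5 * ε) / 2 := by linarith
  have hfinal : Metric.infDist (γ th) Y ≤ 5 * C + ε + (b - a) := by
    calc Metric.infDist (γ th) Y ≤ Metric.infDist (γ a) Y + dist (γ th) (γ a) :=
          Metric.infDist_le_infDist_add_dist
      _ ≤ 5 * C + ε + (b - a) := by
          rw [dist_comm, AC_geo_dist hγ haI hth hath]
          linarith
  have : Metric.infDist (γ th) Y ≤ 20 * C + 4 * ε := by linarith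
  have : 20 * C + η ≤ 20 * C + 4 * ε := by simp [hη] at this ⊢; linarith
  linarith
section AuxACC3

variable {G : Type*} [Group G] {X : Type*} [MetricSpace X]
  [MulAction G X] [IsIsometricSMul G X]

lemma AC_orbit_sub' (c : G) (o : X) :
    cOrbit c o ⊆ Set.range (fun h : G => h • o) := by
  rintro x ⟨i, rfl⟩
  exact ⟨c ^ i, rfl⟩

lemma AC_att_L {o : X} (hproper : ProperAction G o) (c : G) (x : X) :
    ∃ y, y ∈ proj (cOrbit c o) x :=
  AC_exists_proj hproper (AC_orbit_sub' c o) (AC_cOrbit_nonempty c o) x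

lemma AC_att_gL {o : X} (hproper : ProperAction G o) (c g : G) (x : X) :
    ∃ y, y ∈ proj (g • cOrbit c o) x :=
  AC_exists_proj hproper (AC_smul_orbit_sub g c o)
    (AC_smul_nonempty g (AC_cOrbit_nonempty c o)) x

lemma AC_zpow_smul_orbit (c : G) (i : ℤ) (o : X) :
    c ^ i • cOrbit c o = cOrbit c o := by
  ext x
  constructor
  · rintro ⟨y, ⟨j, rfl⟩, rfl⟩
    refine ⟨i + j, ?_⟩
    show c ^ (i + j) • o = c ^ i • c ^ j • o
    rw [zpow_add, mul_smul]
  · rintro ⟨j, rfl⟩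
    refine ⟨c ^ (j - i) • o, ⟨j - i, rfl⟩, ?_⟩
    show c ^ i • c ^ (j - i) • o = c ^ j • o
    rw [smul_smul, ← zpow_add]
    congr 1
    ring

lemma AC_hd_smul (g : G) (s t : Set X) :
    EMetric.hausdorffEdist (g • s) (g • t) = EMetric.hausdorffEdist s t := by
  rw [← Set.image_smul, ← Set.image_smul]
  exact EMetric.hausdorffEdist_image (isometry_smul X g)

lemma AC_Ec_zpow (c : G) (o : X) (i : ℤ) : c ^ i ∈ Ec c o := by
  show EMetric.hausdorffEdist _ _ ≠ ⊤
  rw [AC_zpow_smul_orbit]; show Metric.hausdorffEDist _ _ ≠ ⊤; rw [Metric.hausdorffEDist_self]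
  exact ENNReal.zero_ne_top

lemma AC_Ec_mul {c : G} {o : X} {g h : G} (hg : g ∈ Ec c o) (hh : h ∈ Ec c o) :
    g * h ∈ Ec c o := by
  show EMetric.hausdorffEdist _ _ ≠ ⊤
  have h2 : EMetric.hausdorffEdist ((g * h) • cOrbit c o) (cOrbit c o) ≤
      EMetric.hausdorffEdist (h • cOrbit c o) (cOrbit c o) +
      EMetric.hausdorffEdist (g • cOrbit c o) (cOrbit c o) := by
    rw [mul_smul]
    calc EMetric.hausdorffEdist (g • h • cOrbit c o) (cOrbit c o)
        ≤ EMetric.hausdorffEdist (g • h • cOrbit c o) (g • cOrbit c o) +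
          EMetric.hausdorffEdist (g • cOrbit c o) (cOrbit c o) :=
          EMetric.hausdorffEdist_triangle
      _ = _ := by rw [AC_hd_smul]
  exact ne_top_of_le_ne_top (ENNReal.add_ne_top.2 ⟨hh, hg⟩) h2

lemma AC_Ec_inv {c : G} {o : X} {g : G} (hg : g ∈ Ec c o) : g⁻¹ ∈ Ec c o := by
  show EMetric.hausdorffEdist _ _ ≠ ⊤
  have h1 : EMetric.hausdorffEdist (g • (g⁻¹ • cOrbit c o)) (g • cOrbit c o) =
      EMetric.hausdorffEdist (g⁻¹ • cOrbit c o) (cOrbit c o) := AC_hd_smul g _ _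
  rw [smul_inv_smul] at h1
  rw [← h1]; show Metric.hausdorffEDist _ _ ≠ ⊤; rw [Metric.hausdorffEDist_comm]
  exact hg

lemma AC_norm_inv (o : X) (g : G) : dist o (g⁻¹ • o) = dist o (g • o) := by
  conv_lhs => rw [← dist_smul g o (g⁻¹ • o)]
  rw [smul_inv_smul, dist_comm]

lemma AC_norm_mul (o : X) (g h : G) :
    dist o ((g * h) • o) ≤ dist o (g • o) + dist o (h • o) := by
  have h1 : dist (g • o) ((g * h) • o) = dist o (h • o) := by
    rw [mul_smul, dist_smul]
  calc dist o ((g * h) • o) ≤ dist o (g • o) + dist (g • o) ((g * h) • o) :=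
        dist_triangle _ _ _
    _ = dist o (g • o) + dist o (h • o) := by rw [h1]

lemma AC_dist_zpow_transl (c : G) (o : X) (a b : ℤ) :
    dist (c ^ a • o) (c ^ b • o) = dist o (c ^ (b - a) • o) := by
  conv_rhs => rw [← dist_smul (c ^ a) o (c ^ (b - a) • o)]
  rw [smul_smul, ← zpow_add]
  congr 2
  ring

lemma AC_dist_zpow_le (c : G) (o : X) :
    ∀ n : ℕ, dist o (c ^ (n : ℤ) • o) ≤ n * dist o (c • o) := by
  intro n
  induction n with
  | zero => simp
  | succ n ih =>
    have h1 : dist (c • o) (c ^ ((n:ℤ) + 1) • o) = dist o (c ^ (n : ℤ) • o) := by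
      conv_lhs => rw [show c ^ ((n:ℤ) + 1) • o = c • (c ^ (n:ℤ) • o) by
        rw [smul_smul, ← zpow_one_add]; congr 1; ring]
      rw [dist_smul]
    calc dist o (c ^ ((n:ℕ)+1 : ℤ) • o)
        ≤ dist o (c • o) + dist (c • o) (c ^ ((n:ℤ)+1) • o) := by
          push_cast
          exact dist_triangle _ _ _
      _ ≤ dist o (c • o) + n * dist o (c • o) := by rw [h1]; linarith
      _ = (↑(n+1)) * dist o (c • o) := by push_cast; ring

/-- Undistortedness of the orbit of a strongly contracting element. -/
lemma AC_undistorted {o : X} {c : G} (hproper : ProperAction G o)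
    (hgeo : GeodesicSpace X) (hinj : Function.Injective fun i : ℤ => c ^ i)
    {C : ℝ} (hC1 : 1 ≤ C) (hC : StronglyContractingWith C (cOrbit c o)) :
    ∃ P : ℝ, 1 ≤ P ∧ ∀ i : ℤ, (|i| : ℝ) ≤ P * dist o (c ^ i • o) + 3 * P := by
  classical
  set L := cOrbit c o with hL
  set C₁ : ℝ := C + 4 with hC₁
  have hSfin : {s : ℤ | dist o (c ^ s • o) ≤ C₁}.Finite := by
    have hsub : {s : ℤ | dist o (c ^ s • o) ≤ C₁} ⊆
        (fun i : ℤ => c ^ i) ⁻¹' {g : G | dist o (g • o) ≤ C₁} := fun s hs => hs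
    exact (Set.Finite.preimage hinj.injOn (hproper o C₁)).subset hsub
  have hfin2 : ((fun s : ℤ => (|s| : ℝ)) '' {s : ℤ | dist o (c ^ s • o) ≤ C₁}).Finite :=
    hSfin.image _
  obtain ⟨P₀, hP₀⟩ := hfin2.bddAbove
  have hP₀mem : ∀ s : ℤ, dist o (c ^ s • o) ≤ C₁ → (|s| : ℝ) ≤ P₀ := fun s hs =>
    hP₀ (Set.mem_image_of_mem _ hs)
  have hP₀0 : 0 ≤ P₀ := by
    refine le_trans (by simp) (hP₀mem 0 ?_)
    simp [hC₁]
    linarith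
  set P : ℝ := max P₀ 1 with hP
  refine ⟨P, le_max_right _ _, ?_⟩
  intro i
  obtain ⟨γ, hγ, hγ0, hγT⟩ := hgeo o (c ^ i • o)
  set T : ℝ := dist o (c ^ i • o) with hT
  have hT0 : 0 ≤ T := dist_nonneg
  set N : ℕ := ⌈T⌉₊ with hN
  set pts : ℕ → ℝ := fun l => min (l : ℝ) T with hpts
  have hptsI : ∀ l : ℕ, pts l ∈ Set.Icc (0:ℝ) T := fun l =>
    ⟨le_min (Nat.cast_nonneg l) hT0, min_le_right _ _⟩
  have hkey : ∀ l : ℕ, ∃ j : ℤ, (|j| : ℝ) ≤ (l + 1) * P₀ ∧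
      c ^ j • o ∈ proj L (γ (pts l)) := by
    intro l
    induction l with
    | zero =>
      obtain ⟨p, hp⟩ := AC_att_L hproper c (γ (pts 0))
      obtain ⟨j, hj⟩ := hp.1
      have hj' : c ^ j • o = p := hj
      have hpts0 : pts 0 = 0 := by
        show min ((0:ℕ):ℝ) T = 0
        rw [Nat.cast_zero]
        exact min_eq_left hT0
      have hinf : Metric.infDist (γ (pts 0)) L = 0 := by
        rw [hpts0, hγ0]
        exact Metric.infDist_zero_of_mem ⟨0, by simp⟩
      have h2 := hp.2
      rw [hinf] at h2
      rw [hpts0, hγ0, ← hj'] at h2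
      refine ⟨j, ?_, by rw [hj']; exact hp⟩
      have hb := hP₀mem j (by rw [h2]; simp [hC₁]; linarith)
      push_cast
      linarith
    | succ l ih =>
      obtain ⟨j, hjb, hjp⟩ := ih
      obtain ⟨p', hp'⟩ := AC_att_L hproper c (γ (pts (l + 1)))
      obtain ⟨j', hj'⟩ := hp'.1
      have hq' : c ^ j' • o = p' := hj'
      have hmono : pts l ≤ pts (l + 1) :=
        min_le_min (by push_cast; linarith) (le_refl T)
      have hgap : pts (l + 1) ≤ pts l + 1 := by
        rcases min_cases ((l : ℝ)) T with ⟨h1, h2⟩ | ⟨h1, h2⟩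
        · have hle : pts (l+1) ≤ (l : ℝ) + 1 := by
            refine (min_le_left _ _).trans ?_
            push_cast; linarith
          have hl : pts l = (l : ℝ) := h1
          linarith
        · have hle : pts (l+1) ≤ T := min_le_right _ _
          have hl : pts l = T := h1
          linarith
      have hdd : dist (γ (pts l)) (γ (pts (l+1))) = pts (l+1) - pts l :=
        AC_geo_dist hγ (hptsI l) (hptsI (l+1)) hmono
      have hjump : dist (c ^ j • o) (c ^ j' • o) ≤ C₁ := by
        by_cases hcase : dist (γ (pts l)) (γ (pts (l+1))) ≤ Metric.infDist (γ (pts l)) L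
        · have hpair := AC_pair hC hcase hjp hp'
          rw [← hq'] at hpair
          rw [hC₁]
          linarith
        · push_neg at hcase
          have hsmall : Metric.infDist (γ (pts l)) L < 1 := by
            rw [hdd] at hcase; linarith
          have h1 : dist (γ (pts l)) (c ^ j • o) < 1 := by
            rw [hjp.2]; exact hsmall
          have h2 : Metric.infDist (γ (pts (l+1))) L < 2 := by
            calc Metric.infDist (γ (pts (l+1))) L ≤
                Metric.infDist (γ (pts l)) L + dist (γ (pts (l+1))) (γ (pts l)) :=
                  Metric.infDist_le_infDist_add_dist
              _ < 2 := by rw [dist_comm, hdd]; linarith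
          have h3 : dist (γ (pts (l+1))) (c ^ j' • o) < 2 := by
            have hpd : dist (γ (pts (l+1))) (c ^ j' • o) =
                Metric.infDist (γ (pts (l+1))) L := by rw [hq']; exact hp'.2
            rw [hpd]; exact h2
          have hgap' : pts (l+1) - pts l ≤ 1 := by linarith
          calc dist (c ^ j • o) (c ^ j' • o) ≤
              dist (c ^ j • o) (γ (pts l)) + dist (γ (pts l)) (γ (pts (l+1)))
                + dist (γ (pts (l+1))) (c ^ j' • o) := dist_triangle4 _ _ _ _
            _ ≤ C₁ := by
                rw [dist_comm (c ^ j • o) (γ (pts l)), hdd, hC₁]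
                linarith
      have hjj'' := hP₀mem (j' - j)
        (by rw [← AC_dist_zpow_transl c o j j']; exact hjump)
      push_cast at hjj''
      refine ⟨j', ?_, by rw [hq']; exact hp'⟩
      push_cast at hjb ⊢
      have habs : |(j' : ℝ)| ≤ |(j : ℝ)| + |(j' : ℝ) - (j : ℝ)| := by
        calc |(j' : ℝ)| = |(j : ℝ) + ((j' : ℝ) - (j : ℝ))| := by ring_nf
          _ ≤ _ := abs_add_le _ _
      linarith
  obtain ⟨jN, hjNb, hjNp⟩ := hkey N
  have hptsN : pts N = T := by
    show min ((N:ℕ):ℝ) T = T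
    exact min_eq_right (Nat.le_ceil T)
  have hinfN : Metric.infDist (γ (pts N)) L = 0 := by
    rw [hptsN, hγT]
    exact Metric.infDist_zero_of_mem ⟨i, rfl⟩
  have hend : dist o (c ^ (jN - i) • o) = 0 := by
    rw [← AC_dist_zpow_transl c o i jN]
    have h2 := hjNp.2
    rw [hinfN] at h2
    rw [hptsN, hγT] at h2
    exact h2
  have hjNi := hP₀mem (jN - i) (by rw [hend, hC₁]; linarith)
  push_cast at hjNi
  have hNT : (N : ℝ) < T + 1 := Nat.ceil_lt_add_one hT0
  have habs : |(i : ℝ)| ≤ |(jN : ℝ)| + |(jN : ℝ) - (i : ℝ)| := by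
    calc |(i : ℝ)| = |(jN : ℝ) - ((jN : ℝ) - (i : ℝ))| := by ring_nf
      _ ≤ |(jN : ℝ)| + |(jN : ℝ) - (i : ℝ)| := abs_sub _ _
  have hP₀P : P₀ ≤ P := le_max_left _ _
  have hP1 : 1 ≤ P := le_max_right _ _
  push_cast at hjNb ⊢
  nlinarith [hT0, hP₀0]
section AuxACC4

variable {G : Type*} [Group G] {X : Type*} [MetricSpace X]
  [MulAction G X] [IsIsometricSMul G X]

lemma AC_mem_gL (g c : G) (o : X) (i : ℤ) : (g * c ^ i) • o ∈ g • cOrbit c o :=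
  ⟨c ^ i • o, ⟨i, rfl⟩, (mul_smul g (c ^ i) o).symm⟩

lemma AC_infDist_le_of_Ec {c : G} {o : X} {g : G} (hg : g ∈ Ec c o) {y : X}
    (hy : y ∈ g • cOrbit c o) :
    Metric.infDist y (cOrbit c o) ≤
      (EMetric.hausdorffEdist (g • cOrbit c o) (cOrbit c o)).toReal := by
  have h1 : EMetric.infEdist y (cOrbit c o) ≤
      EMetric.hausdorffEdist (g • cOrbit c o) (cOrbit c o) :=
    EMetric.infEdist_le_hausdorffEdist_of_mem hy
  exact ENNReal.toReal_mono hg h1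

/-- One-point closeness: the axis of `g ∈ E(c)` passes uniformly close to `⟨c⟩•o`. -/
lemma AC_close {o : X} {c : G} (hproper : ProperAction G o) (hgeo : GeodesicSpace X)
    {C : ℝ} (hC1 : 1 ≤ C) (hC : StronglyContractingWith C (cOrbit c o))
    {P : ℝ} (hP1 : 1 ≤ P)
    (hP : ∀ i : ℤ, (|i| : ℝ) ≤ P * dist o (c ^ i • o) + 3 * P)
    {g : G} (hg : g ∈ Ec c o) :
    ∃ m l : ℤ, dist (c ^ m • o) ((g * c ^ l) • o) ≤ 25 * C := by
  classical
  set L := cOrbit c o with hL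
  set K' : ℝ := (EMetric.hausdorffEdist (g • L) L).toReal with hK'
  have hK'0 : 0 ≤ K' := ENNReal.toReal_nonneg
  have hKle : ∀ y ∈ g • L, Metric.infDist y L ≤ K' := fun y hy =>
    AC_infDist_le_of_Ec hg hy
  set n : ℕ := ⌈P * (3 * K' + 3 * C + 4)⌉₊ with hn
  set M : ℤ := (n : ℤ) with hM
  set y₁ : X := (g * c ^ (-M)) • o with hy₁
  set y₂ : X := (g * c ^ M) • o with hy₂
  set T : ℝ := dist y₁ y₂ with hT
  have hT0 : 0 ≤ T := dist_nonneg
  have hTval : T = dist o (c ^ (2 * M) • o) := by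
    rw [hT, hy₁, hy₂, mul_smul, mul_smul, dist_smul, AC_dist_zpow_transl]
    congr 2
    ring
  have hTbig : 6 * K' + 6 * C + 5 ≤ T := by
    have h1 := hP (2 * M)
    rw [← hTval] at h1
    have h2 : 2 * (n : ℝ) ≤ P * T + 3 * P := by
      have hcast : ((2 * M : ℤ) : ℝ) = 2 * (n : ℝ) := by rw [hM]; push_cast; ring
      calc 2 * (n : ℝ) = |((2 * M : ℤ) : ℝ)| := by
            rw [hcast, abs_of_nonneg (by positivity)]
        _ ≤ _ := h1
    have h3 : P * (3 * K' + 3 * C + 4) ≤ (n : ℝ) := Nat.le_ceil _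
    have hP0 : 0 < P := by linarith
    nlinarith
  obtain ⟨γ, hγ, hγ0, hγT⟩ := hgeo y₁ y₂
  rw [← hT] at hγ hγT
  have hfar : ¬ ∀ t ∈ Set.Icc (0:ℝ) T, 5 * C ≤ Metric.infDist (γ t) L := by
    intro hfar
    obtain ⟨p, hp⟩ := AC_att_L hproper c (γ 0)
    obtain ⟨q, hq⟩ := AC_att_L hproper c (γ T)
    have hfp := AC_far_proj hC (AC_att_L hproper c) (by linarith : (0:ℝ) < 5 * C)
      hγ hT0 hfar hp hq
    have hCne : C ≠ 0 := by linarith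
    have hval : C * (T / (5 * C) + 2) = T / 5 + 2 * C := by field_simp
    rw [hval] at hfp
    have hp1 : dist (γ 0) p ≤ K' := by
      rw [hp.2, hγ0]
      exact hKle y₁ (by rw [hy₁]; exact AC_mem_gL g c o (-M))
    have hq1 : dist (γ T) q ≤ K' := by
      rw [hq.2, hγT]
      exact hKle y₂ (by rw [hy₂]; exact AC_mem_gL g c o M)
    have h4 : dist (γ 0) (γ T) = T := by
      have := AC_geo_dist hγ ⟨le_refl _, hT0⟩ ⟨hT0, le_refl _⟩ hT0
      simpa using this
    have htri : T ≤ dist (γ 0) p + dist p q + dist q (γ T) := by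
      calc T = dist (γ 0) (γ T) := h4.symm
        _ ≤ dist (γ 0) p + dist p q + dist q (γ T) := dist_triangle4 _ _ _ _
    rw [dist_comm q (γ T)] at htri
    linarith
  push_neg at hfar
  obtain ⟨t, ht, htd⟩ := hfar
  have hz2 : Metric.infDist (γ t) (g • L) ≤ 20 * C := by
    refine AC_qc hC1 (AC_contr_smul hC g) (AC_att_gL hproper c g) hγ hT0 ?_ ?_ t ht
    · rw [hγ0, hy₁]; exact AC_mem_gL g c o (-M)
    · rw [hγT, hy₂]; exact AC_mem_gL g c o M
  obtain ⟨p, hp⟩ := AC_att_L hproper c (γ t)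
  obtain ⟨q, hq⟩ := AC_att_gL hproper c g (γ t)
  obtain ⟨m, hm⟩ := hp.1
  obtain ⟨w, ⟨l, hl⟩, hw⟩ := hq.1
  refine ⟨m, l, ?_⟩
  have hm' : c ^ m • o = p := hm
  have hq' : (g * c ^ l) • o = q := by
    rw [← hw, ← hl, mul_smul]
  have hd1 : dist (γ t) p ≤ 5 * C := by rw [hp.2]; linarith
  have hd2 : dist (γ t) q ≤ 20 * C := by rw [hq.2]; exact hz2
  calc dist (c ^ m • o) ((g * c ^ l) • o) = dist p q := by rw [hm', hq']
    _ ≤ dist p (γ t) + dist (γ t) q := dist_triangle _ _ _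
    _ ≤ 25 * C := by rw [dist_comm p (γ t)]; linarith

/-- Structure of the elementary closure: every element is `c^s·h` with `h` of bounded norm. -/
lemma AC_struct {o : X} {c : G} (hproper : ProperAction G o) (hgeo : GeodesicSpace X)
    {C : ℝ} (hC1 : 1 ≤ C) (hC : StronglyContractingWith C (cOrbit c o))
    {P : ℝ} (hP1 : 1 ≤ P)
    (hP : ∀ i : ℤ, (|i| : ℝ) ≤ P * dist o (c ^ i • o) + 3 * P) :
    ∃ K : ℝ, 0 ≤ K ∧ ∀ g ∈ Ec c o, ∃ (s : ℤ) (h : G),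
      g = c ^ s * h ∧ dist o (h • o) ≤ K := by
  classical
  set L := cOrbit c o with hL
  set F' : Set G := {f : G | dist o (f • o) ≤ 25 * C ∧ f ∈ Ec c o} with hF'
  have hF'fin : F'.Finite := (hproper o (25 * C)).subset fun f hf => hf.1
  obtain ⟨K₁, hK₁⟩ := (hF'fin.image
    (fun f => (EMetric.hausdorffEdist (f • L) L).toReal)).bddAbove
  set K : ℝ := max K₁ 0 with hK
  refine ⟨K, le_max_right _ _, ?_⟩
  intro g hg
  obtain ⟨m, l, hml⟩ := AC_close hproper hgeo hC1 hC hP1 hP hg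
  set f : G := c ^ (-m) * g * c ^ l with hf
  have hgf : g * c ^ l = c ^ m * f := by rw [hf]; group
  have hfnorm : dist o (f • o) ≤ 25 * C := by
    have h1 : dist (c ^ m • o) ((g * c ^ l) • o) = dist o (f • o) := by
      rw [hgf, mul_smul (c ^ m) f o, dist_smul]
    rw [← h1]
    exact hml
  have hfEc : f ∈ Ec c o := by
    rw [hf]
    exact AC_Ec_mul (AC_Ec_mul (AC_Ec_zpow c o (-m)) hg) (AC_Ec_zpow c o l)
  have hfF' : f ∈ F' := ⟨hfnorm, hfEc⟩
  have hfK : ∀ y ∈ f • L, Metric.infDist y L ≤ K := by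
    intro y hy
    have h1 := AC_infDist_le_of_Ec hfEc hy
    have h2 : (EMetric.hausdorffEdist (f • L) L).toReal ≤ K₁ :=
      hK₁ (Set.mem_image_of_mem _ hfF')
    calc Metric.infDist y L ≤ _ := h1
      _ ≤ K₁ := h2
      _ ≤ K := le_max_left _ _
  obtain ⟨p, hp⟩ := AC_att_L hproper c ((f * c ^ (-l)) • o)
  obtain ⟨ν, hν⟩ := hp.1
  have hν' : c ^ ν • o = p := hν
  set h : G := c ^ (-ν) * f * c ^ (-l) with hh
  have hfh : f * c ^ (-l) = c ^ ν * h := by rw [hh]; group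
  refine ⟨m + ν, h, ?_, ?_⟩
  · have : g = c ^ m * f * c ^ (-l) := by rw [hf]; group
    rw [this, mul_assoc, hfh, zpow_add]
    group
  · have h1 : dist (c ^ ν • o) ((f * c ^ (-l)) • o) = dist o (h • o) := by
      conv_lhs => rw [hfh]
      rw [mul_smul (c ^ ν) h o, dist_smul]
    rw [← h1, hν', dist_comm, hp.2]
    exact hfK _ (AC_mem_gL f c o (-l))
end AuxACC4
section AuxACC5

variable {G : Type*} [Group G] {X : Type*} [MetricSpace X]
  [MulAction G X] [IsIsometricSMul G X]

/-- Counting: if every element of `G` is `c^s·h` with `h` of norm at most `K`,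
then balls grow linearly. -/
lemma AC_count {o : X} {c : G} (hproper : ProperAction G o)
    {P K : ℝ} (hK0 : 0 ≤ K)
    (hP : ∀ i : ℤ, (|i| : ℝ) ≤ P * dist o (c ^ i • o) + 3 * P)
    (hG : ∀ g : G, ∃ (s : ℤ) (h : G), g = c ^ s * h ∧ dist o (h • o) ≤ K) :
    ∃ κ : ℝ, 0 ≤ κ ∧ ∀ r : ℝ, 0 ≤ r →
      (({g : G | dist o (g • o) ≤ r}).ncard : ℝ) ≤ κ * (2 * (P * (r + K) + 3 * P) + 3) := by
  classical
  have hP0 : 0 ≤ P := by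
    have := hP 0
    simp at this
    nlinarith [abs_nonneg ((0:ℤ):ℝ), dist_nonneg (x := o) (y := c ^ (0:ℤ) • o)]
  set FKf : Finset G := (hproper o K).toFinset with hFKf
  refine ⟨FKf.card, Nat.cast_nonneg _, ?_⟩
  intro r hr
  have hbfin : ({g : G | dist o (g • o) ≤ r}).Finite := hproper o r
  set Mr : ℤ := ⌈P * (r + K) + 3 * P⌉ with hMr
  have hy0 : 0 ≤ P * (r + K) + 3 * P := by nlinarith
  have hMr0 : 0 ≤ Mr := Int.ceil_nonneg hy0
  set φ : G → ℤ × G := fun g => ((hG g).choose, (hG g).choose_spec.choose) with hφdef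
  have hφ : ∀ g : G, g = c ^ (φ g).1 * (φ g).2 ∧ dist o ((φ g).2 • o) ≤ K := fun g =>
    ⟨(hG g).choose_spec.choose_spec.1, (hG g).choose_spec.choose_spec.2⟩
  have hinjφ : ∀ g₁ g₂ : G, φ g₁ = φ g₂ → g₁ = g₂ := by
    intro g₁ g₂ h
    rw [(hφ g₁).1, (hφ g₂).1, h]
  have hmaps : ∀ g ∈ hbfin.toFinset, φ g ∈ Finset.Icc (-Mr) Mr ×ˢ FKf := by
    intro g hg
    rw [Set.Finite.mem_toFinset] at hg
    have hgr : dist o (g • o) ≤ r := hg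
    have key : ∀ (s : ℤ) (h : G), g = c ^ s * h → dist o (h • o) ≤ K →
        dist o (c ^ s • o) ≤ r + K := by
      intro s h he hKh
      have hrep : c ^ s = g * h⁻¹ := by
        rw [he, mul_assoc, mul_inv_cancel, mul_one]
      rw [hrep]
      calc dist o ((g * h⁻¹) • o) ≤
          dist o (g • o) + dist o (h⁻¹ • o) := AC_norm_mul o g _
        _ = dist o (g • o) + dist o (h • o) := by rw [AC_norm_inv]
        _ ≤ r + K := add_le_add hgr hKh
    have hcs : dist o (c ^ (φ g).1 • o) ≤ r + K :=
      key (φ g).1 (φ g).2 (hφ g).1 (hφ g).2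
    have hs : (|(φ g).1| : ℝ) ≤ P * (r + K) + 3 * P := by
      have h1 := hP (φ g).1
      nlinarith
    have hsI : (φ g).1 ∈ Finset.Icc (-Mr) Mr := by
      rw [Finset.mem_Icc]
      have hMrle : P * (r + K) + 3 * P ≤ (Mr : ℝ) := Int.le_ceil _
      have habs := abs_le.1 (le_trans hs hMrle)
      constructor
      · exact_mod_cast habs.1
      · exact_mod_cast habs.2
    refine Finset.mem_product.2 ⟨hsI, ?_⟩
    rw [hFKf, Set.Finite.mem_toFinset]
    exact (hφ g).2
  have hcard := Finset.card_le_card_of_injOn φ hmaps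
    (fun g₁ _ g₂ _ h => hinjφ g₁ g₂ h)
  rw [Set.ncard_eq_toFinset_card _ hbfin]
  have hIcc : ((Finset.Icc (-Mr) Mr).card : ℝ) ≤ 2 * (P * (r + K) + 3 * P) + 3 := by
    rw [Int.card_Icc]
    have h1 : (Mr + 1 - -Mr).toNat = (2 * Mr + 1).toNat := by omega
    rw [h1]
    have h2 : ((2 * Mr + 1).toNat : ℝ) = ((2 * Mr + 1 : ℤ) : ℝ) := by
      exact_mod_cast congrArg (fun z : ℤ => (z : ℝ))
        (Int.toNat_of_nonneg (by omega : (0:ℤ) ≤ 2 * Mr + 1))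
    rw [h2]
    push_cast
    have h4 : (Mr : ℝ) < P * (r + K) + 3 * P + 1 := Int.ceil_lt_add_one _
    linarith
  calc (hbfin.toFinset.card : ℝ) ≤ ((Finset.Icc (-Mr) Mr ×ˢ FKf).card : ℝ) := by
        exact_mod_cast hcard
    _ = ((Finset.Icc (-Mr) Mr).card : ℝ) * (FKf.card : ℝ) := by
        rw [Finset.card_product]; push_cast; ring
    _ ≤ (2 * (P * (r + K) + 3 * P) + 3) * (FKf.card : ℝ) := by
        apply mul_le_mul_of_nonneg_right hIcc (Nat.cast_nonneg _)
    _ = (FKf.card : ℝ) * (2 * (P * (r + K) + 3 * P) + 3) := by ring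

end AuxACC5

end AuxACC3
end AuxACC2

/-- **Lemma.** If `G` acts properly with a strongly contracting element `c'` and has purely
exponential growth, then every infinite normal subgroup of `G` contains an element that is
not in `E(c')`. -/
theorem normal_subgroup_not_in_elementary_closure
    {G : Type*} [Group G] {X : Type*} [MetricSpace X]
    [MulAction G X] [IsIsometricSMul G X] (o : X)
    (hgeo : GeodesicSpace X)
    (hproper : ProperAction G o)
    (c' : G) (hc' : IsStronglyContractingElement c' o)
    (hPE : PurelyExponential G o) :
    ∀ N : Subgroup G, N.Normal → (N : Set G).Infinite →
      ∃ n ∈ N, n ∉ Ec c' o := by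
  classical
  intro N hNnormal hNinf
  by_contra hcon
  push_neg at hcon
  obtain ⟨hord, C₀, hC₀⟩ := hc'
  set C : ℝ := max C₀ 1 with hCdef
  have hC1 : 1 ≤ C := le_max_right _ _
  have hC : StronglyContractingWith C (cOrbit c' o) :=
    ⟨by linarith, fun x x' hxx => le_trans (hC₀.2 x x' hxx) (le_max_left _ _)⟩
  have hinj : Function.Injective fun i : ℤ => c' ^ i :=
    injective_zpow_iff_not_isOfFinOrder.2 hord
  obtain ⟨P, hP1, hP⟩ := AC_undistorted hproper hgeo hinj hC1 hC
  obtain ⟨K, hK0, hstruct⟩ := AC_struct hproper hgeo hC1 hC hP1 hP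
  -- pigeonhole: a nontrivial power of `c'` lies in `N`
  set FK : Set G := {h : G | dist o (h • o) ≤ K} with hFKdef
  have hFKfin : FK.Finite := hproper o K
  set Th : G → Set G := fun h => {n : G | n ∈ (N : Set G) ∧ ∃ s : ℤ, n = c' ^ s * h}
    with hThdef
  have hcover : (N : Set G) ⊆ ⋃ h ∈ FK, Th h := by
    intro n hn
    obtain ⟨s, h, hsh, hKh⟩ := hstruct n (hcon n hn)
    exact Set.mem_biUnion hKh ⟨hn, s, hsh⟩
  have hTinf : ∃ h ∈ FK, (Th h).Infinite := by
    by_contra hfin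
    push_neg at hfin
    exact hNinf (Set.Finite.subset (Set.Finite.biUnion hFKfin hfin) hcover)
  obtain ⟨h₀, hh₀, hTh₀⟩ := hTinf
  obtain ⟨n₁, hn₁, n₂, hn₂, hne⟩ := hTh₀.nontrivial
  obtain ⟨hn₁N, s₁, hs₁⟩ := hn₁
  obtain ⟨hn₂N, s₂, hs₂⟩ := hn₂
  have hs12 : s₁ ≠ s₂ := by
    intro e; exact hne (by rw [hs₁, hs₂, e])
  have hck₀ : c' ^ (s₁ - s₂) ∈ N := by
    have he : c' ^ (s₁ - s₂) = n₁ * n₂⁻¹ := by rw [hs₁, hs₂]; group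
    rw [he]
    exact N.mul_mem hn₁N (N.inv_mem hn₂N)
  obtain ⟨k, hkpos, hckN⟩ : ∃ k : ℤ, 0 < k ∧ c' ^ k ∈ N := by
    rcases lt_trichotomy (s₁ - s₂) 0 with hlt | heq | hgt
    · refine ⟨-(s₁ - s₂), by linarith, ?_⟩
      rw [zpow_neg]
      exact N.inv_mem hck₀
    · exact absurd heq (sub_ne_zero.2 hs12)
    · exact ⟨s₁ - s₂, hgt, hck₀⟩
  -- every translate of the axis stays in a bounded neighbourhood of the axis
  have hhalf : ∀ g : G, ∀ y ∈ g • cOrbit c' o,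
      Metric.infDist y (cOrbit c' o) ≤
        K + dist o (g • o) + (k.toNat : ℝ) * dist o (c' • o) := by
    intro g y hy
    obtain ⟨w, hw, rfl⟩ := Set.mem_smul_set.1 hy
    obtain ⟨i, rfl⟩ := hw
    set q : ℤ := i / k with hq
    set rr : ℤ := i % k with hrr
    have hr0 : 0 ≤ rr := Int.emod_nonneg i (ne_of_gt hkpos)
    have hrk : rr < k := Int.emod_lt_of_pos i hkpos
    have hi : i = k * q + rr := by rw [hq, hrr]; exact (Int.mul_ediv_add_emod i k).symm
    have hmN : g * c' ^ (k * q) * g⁻¹ ∈ N := by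
      refine hNnormal.conj_mem _ ?_ g
      rw [zpow_mul]
      exact N.zpow_mem hckN q
    obtain ⟨s, h, hsh, hhK⟩ := hstruct _ (hcon _ hmN)
    have hgc : g * c' ^ (k * q) = c' ^ s * (h * g) := by
      have h2 : g * c' ^ (k * q) = (g * c' ^ (k * q) * g⁻¹) * g := by group
      rw [h2, hsh]; group
    have hkey : dist ((g * c' ^ (k * q)) • o) (c' ^ s • o) ≤ K + dist o (g • o) := by
      rw [hgc, mul_smul (c' ^ s) (h * g) o, dist_comm, dist_smul]
      calc dist o ((h * g) • o) ≤ dist o (h • o) + dist o (g • o) := AC_norm_mul o h g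
        _ ≤ K + dist o (g • o) := by linarith
    have hd2 : dist (g • c' ^ i • o) ((g * c' ^ (k * q)) • o) ≤
        (k.toNat : ℝ) * dist o (c' • o) := by
      rw [mul_smul g (c' ^ (k * q)) o, dist_smul]
      have e1 : dist (c' ^ i • o) (c' ^ (k * q) • o) = dist o (c' ^ (k * q - i) • o) :=
        AC_dist_zpow_transl c' o i (k * q)
      have e2 : k * q - i = -rr := by rw [hi]; ring
      rw [e1, e2, zpow_neg, AC_norm_inv]
      have e3 : c' ^ rr = c' ^ ((rr.toNat : ℤ)) := by rw [Int.toNat_of_nonneg hr0]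
      rw [e3]
      calc dist o (c' ^ ((rr.toNat : ℤ)) • o) ≤ (rr.toNat : ℝ) * dist o (c' • o) :=
            AC_dist_zpow_le c' o rr.toNat
        _ ≤ (k.toNat : ℝ) * dist o (c' • o) := by
            apply mul_le_mul_of_nonneg_right _ dist_nonneg
            exact_mod_cast Int.toNat_le_toNat hrk.le
    calc Metric.infDist (g • c' ^ i • o) (cOrbit c' o) ≤
        dist (g • c' ^ i • o) (c' ^ s • o) := Metric.infDist_le_dist_of_mem ⟨s, rfl⟩
      _ ≤ dist (g • c' ^ i • o) ((g * c' ^ (k * q)) • o) +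
          dist ((g * c' ^ (k * q)) • o) (c' ^ s • o) := dist_triangle _ _ _
      _ ≤ K + dist o (g • o) + (k.toNat : ℝ) * dist o (c' • o) := by linarith
  -- hence every `g` lies in the elementary closure
  have hLne : (cOrbit c' o).Nonempty := AC_cOrbit_nonempty c' o
  have hGEc : ∀ g : G, g ∈ Ec c' o := by
    intro g
    set B : ℝ := max (K + dist o (g • o) + (k.toNat : ℝ) * dist o (c' • o))
      (K + dist o (g⁻¹ • o) + (k.toNat : ℝ) * dist o (c' • o)) with hB
    show EMetric.hausdorffEdist (g • cOrbit c' o) (cOrbit c' o) ≠ ⊤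
    have hle : EMetric.hausdorffEdist (g • cOrbit c' o) (cOrbit c' o) ≤
        ENNReal.ofReal B := by
      apply EMetric.hausdorffEdist_le_of_infEdist
      · intro y hy
        have h1 : Metric.infDist y (cOrbit c' o) ≤ B :=
          le_trans (hhalf g y hy) (le_max_left _ _)
        rw [← ENNReal.ofReal_toReal (Metric.infEdist_ne_top hLne)]
        exact ENNReal.ofReal_le_ofReal h1
      · intro x hx
        have hmem : g⁻¹ • x ∈ g⁻¹ • cOrbit c' o := Set.smul_mem_smul_set hx
        have h2 : Metric.infDist (g⁻¹ • x) (cOrbit c' o) ≤ B :=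
          le_trans (hhalf g⁻¹ (g⁻¹ • x) hmem) (le_max_right _ _)
        have h3 : Metric.infDist x (g • cOrbit c' o) =
            Metric.infDist (g⁻¹ • x) (cOrbit c' o) := by
          rw [← AC_infDist_smul g⁻¹ x (g • cOrbit c' o), inv_smul_smul]
        have hgne : (g • cOrbit c' o).Nonempty := AC_smul_nonempty g hLne
        rw [← ENNReal.ofReal_toReal (Metric.infEdist_ne_top hgne)]
        refine ENNReal.ofReal_le_ofReal ?_
        rw [← h3] at h2
        exact h2
    exact ne_top_of_le_ne_top ENNReal.ofReal_ne_top hle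
  -- counting contradiction with purely exponential growth
  have hG : ∀ g : G, ∃ (s : ℤ) (h : G), g = c' ^ s * h ∧ dist o (h • o) ≤ K :=
    fun g => hstruct g (hGEc g)
  obtain ⟨κ, hκ0, hcnt⟩ := AC_count hproper hK0 hP hG
  obtain ⟨δ, Δ, A, hδ, hΔ, hA, hshell⟩ := hPE
  have hA0 : (0:ℝ) < A := by linarith
  have hP0 : (0:ℝ) ≤ P := by linarith
  set a : ℝ := A * κ * 2 * P with ha
  set b : ℝ := A * (κ * (2 * (P * (Δ + K) + 3 * P) + 3)) with hb
  have ha0 : 0 ≤ a := by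
    rw [ha]
    have := mul_nonneg (mul_nonneg hA0.le hκ0) (by norm_num : (0:ℝ) ≤ 2)
    exact mul_nonneg this hP0
  have hb0 : 0 ≤ b := by
    rw [hb]
    refine mul_nonneg hA0.le (mul_nonneg hκ0 ?_)
    nlinarith
  have hmain : ∀ r : ℝ, 0 ≤ r → Real.exp (δ * r) ≤ a * r + b := by
    intro r hr
    have h1 := (hshell r hr).1
    have hsub : {g : G | r < dist o (g • o) ∧ dist o (g • o) ≤ r + Δ} ⊆
        {g : G | dist o (g • o) ≤ r + Δ} := fun g hg => hg.2
    have h2 : ({g : G | r < dist o (g • o) ∧ dist o (g • o) ≤ r + Δ}).ncard ≤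
        ({g : G | dist o (g • o) ≤ r + Δ}).ncard :=
      Set.ncard_le_ncard hsub (hproper o (r + Δ))
    have h3 := hcnt (r + Δ) (by linarith)
    have h4 : Real.exp (δ * r) / A ≤ κ * (2 * (P * (r + Δ + K) + 3 * P) + 3) := by
      calc Real.exp (δ * r) / A ≤ _ := h1
        _ ≤ (({g : G | dist o (g • o) ≤ r + Δ}).ncard : ℝ) := by exact_mod_cast h2
        _ ≤ _ := h3
    rw [div_le_iff₀ hA0] at h4
    calc Real.exp (δ * r) ≤ κ * (2 * (P * (r + Δ + K) + 3 * P) + 3) * A := h4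
      _ = a * r + b := by rw [ha, hb]; ring
  set r : ℝ := max 1 (4 * (a + b + 1) / δ ^ 2) with hrdef
  have hr1 : 1 ≤ r := le_max_left _ _
  have hr0 : 0 ≤ r := by linarith
  have hδ2 : 0 < δ ^ 2 := pow_pos hδ 2
  have hrδ : 4 * (a + b + 1) ≤ δ ^ 2 * r := by
    have hmr := le_max_right 1 (4 * (a + b + 1) / δ ^ 2)
    rw [div_le_iff₀ hδ2] at hmr
    linarith
  have hE := Real.add_one_le_exp (δ * r / 2)
  have hEe : Real.exp (δ * r / 2) * Real.exp (δ * r / 2) = Real.exp (δ * r) := by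
    rw [← Real.exp_add]; ring_nf
  have hcontr := hmain r hr0
  have hu0 : 0 ≤ δ * r / 2 + 1 := by positivity
  have h5 : (δ * r / 2 + 1) * (δ * r / 2 + 1) ≤ Real.exp (δ * r) := by
    rw [← hEe]
    exact mul_le_mul hE hE hu0 (Real.exp_pos _).le
  have h6 : (δ * r / 2 + 1) * (δ * r / 2 + 1) ≤ a * r + b := le_trans h5 hcontr
  have h7 : 0 ≤ b * (r - 1) := mul_nonneg hb0 (by linarith)
  have h8 : 0 ≤ (δ ^ 2 * r - 4 * (a + b + 1)) * r := mul_nonneg (by linarith) hr0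
  nlinarith [h6, h7, h8, hδ, hr1, mul_pos hδ (lt_of_lt_of_le zero_lt_one hr1)]

end ACcogrowth
end
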